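/- arXiv:1704.08836 — 4 statements merged into one kernel-verified Lean document; each statement's English description precedes it below -/
import Mathlib

section
/- For a node n ∉ L in a coordination graph, the change in objective satisfies F(L ∪ {n}) − F(L) = Σ_{i ∈ N_in(n) \ (L ∪ {n})} ( max_{j ∈ N_out(i) ∩ (L ∪ {n})} w(i,j) − max_{j ∈ N_out(i) ∩ L} w(i,j) ) − max_{j ∈ N_out(n) ∩ L} w(n,j). -/
open Finset

/-- Out-neighborhood of `i` in the edge set `E`. -/
def Nout {V : Type*} [Fintype V] [DecidableEq V] (E : Finset (V × V)) (i : V) : Finset V :=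
  univ.filter (fun j => (i, j) ∈ E)

/-- In-neighborhood of `i` in the edge set `E`. -/
def Nin {V : Type*} [Fintype V] [DecidableEq V] (E : Finset (V × V)) (i : V) : Finset V :=
  univ.filter (fun j => (j, i) ∈ E)

/-- Maximum of `f` over `s`, with the maximum over the empty set defined to be `0`. -/
def maxw {V : Type*} (s : Finset V) (f : V → ℝ) : ℝ :=
  s.fold max 0 f

/-- The clustering objective `F(L)`. -/
def Fobj {V : Type*} [Fintype V] [DecidableEq V] (E : Finset (V × V)) (w : V × V → ℝ)
    (L : Finset V) : ℝ :=
  ∑ i ∈ univ \ L, maxw ((Nout E i) ∩ L) (fun j => w (i, j))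

/-- Change of the objective when adding a node `n ∉ L` to the leader set. -/
theorem stmt3 {V : Type*} [Fintype V] [DecidableEq V] (E : Finset (V × V)) (w : V × V → ℝ)
    (hw : ∀ e ∈ E, 0 < w e) (hloop : ∀ v : V, (v, v) ∉ E)
    (L : Finset V) (n : V) (hn : n ∉ L) :
    Fobj E w (L ∪ {n}) - Fobj E w L =
      (∑ i ∈ Nin E n \ (L ∪ {n}),
        (maxw ((Nout E i) ∩ (L ∪ {n})) (fun j => w (i, j))
          - maxw ((Nout E i) ∩ L) (fun j => w (i, j))))
      - maxw ((Nout E n) ∩ L) (fun j => w (n, j)) := by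
  classical
  have hS : univ \ (L ∪ {n}) = (univ \ L).erase n := by
    ext x; simp [Finset.mem_erase, and_comm, or_comm]
  have hnmem : n ∈ univ \ L := by simp [hn]
  have hFL : Fobj E w L =
      (∑ i ∈ (univ \ L).erase n, maxw ((Nout E i) ∩ L) (fun j => w (i, j)))
        + maxw ((Nout E n) ∩ L) (fun j => w (n, j)) := by
    rw [Finset.sum_erase_add _ _ hnmem]; rfl
  have hFU : Fobj E w (L ∪ {n}) =
      ∑ i ∈ (univ \ L).erase n, maxw ((Nout E i) ∩ (L ∪ {n})) (fun j => w (i, j)) := by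
    rw [Fobj, hS]
  rw [hFL, hFU]
  rw [sub_add_eq_sub_sub, ← Finset.sum_sub_distrib]
  congr 1
  apply (Finset.sum_subset ?_ ?_).symm
  · intro i hi
    simp only [Finset.mem_sdiff, Nin, Finset.mem_filter] at hi
    simp only [Finset.mem_erase, Finset.mem_sdiff, Finset.mem_univ, true_and]
    constructor
    · intro h; exact hi.2 (by simp [h])
    · intro h; exact hi.2 (by simp [h])
  · intro i hi hni
    have hiE : (i, n) ∉ E := by
      simp only [Finset.mem_erase, Finset.mem_sdiff, Finset.mem_univ, true_and] at hi
      simp only [Finset.mem_sdiff, Nin, Finset.mem_filter, Finset.mem_univ, true_and,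
        not_and, not_not] at hni
      intro hE
      have := hni hE
      simp only [Finset.mem_union, Finset.mem_singleton] at this
      rcases this with h | h
      · exact hi.2 h
      · exact hi.1 h
    have : (Nout E i) ∩ (L ∪ {n}) = (Nout E i) ∩ L := by
      ext j
      simp only [Nout, Finset.mem_inter, Finset.mem_filter, Finset.mem_univ, true_and,
        Finset.mem_union, Finset.mem_singleton]
      constructor
      · rintro ⟨hE, h | h⟩
        · exact ⟨hE, h⟩
        · exact absurd (h ▸ hE) hiE
      · rintro ⟨hE, h⟩; exact ⟨hE, Or.inl h⟩
    rw [this, sub_self]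
end

section
/- For a node n ∈ L in a coordination graph, F(L \ {n}) − F(L) = Σ_{i ∈ N_in(n) \ L} ( max_{j ∈ N_out(i) ∩ (L \ {n})} w(i,j) − max_{j ∈ N_out(i) ∩ L} w(i,j) ) + max_{j ∈ N_out(n) ∩ (L \ {n})} w(n,j). -/
open Finset

/-- Change of the objective when removing a node `n ∈ L` from the leader set. -/
theorem stmt4 {V : Type*} [Fintype V] [DecidableEq V] (E : Finset (V × V)) (w : V × V → ℝ)
    (hw : ∀ e ∈ E, 0 < w e) (hloop : ∀ v : V, (v, v) ∉ E)
    (L : Finset V) (n : V) (hn : n ∈ L) :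
    Fobj E w (L \ {n}) - Fobj E w L =
      (∑ i ∈ Nin E n \ L,
        (maxw ((Nout E i) ∩ (L \ {n})) (fun j => w (i, j))
          - maxw ((Nout E i) ∩ L) (fun j => w (i, j))))
      + maxw ((Nout E n) ∩ (L \ {n})) (fun j => w (n, j)) := by
  have hset : univ \ (L \ {n}) = insert n (univ \ L) := by
    ext x
    simp only [mem_sdiff, mem_univ, mem_insert, mem_singleton, true_and]
    constructor
    · rintro h
      by_cases hx : x = n
      · exact Or.inl hx
      · exact Or.inr (fun hxL => h ⟨hxL, hx⟩)
    · rintro (rfl | h)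
      · rintro ⟨_, h2⟩; exact h2 rfl
      · rintro ⟨h1, _⟩; exact h h1
  have hnmem : n ∉ univ \ L := by simp [hn]
  have h1 : Fobj E w (L \ {n}) =
      (∑ i ∈ univ \ L, maxw ((Nout E i) ∩ (L \ {n})) (fun j => w (i, j)))
        + maxw ((Nout E n) ∩ (L \ {n})) (fun j => w (n, j)) := by
    rw [Fobj, hset, Finset.sum_insert hnmem]; ring
  have h2 : ∑ i ∈ univ \ L,
      (maxw ((Nout E i) ∩ (L \ {n})) (fun j => w (i, j))
        - maxw ((Nout E i) ∩ L) (fun j => w (i, j))) =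
      ∑ i ∈ Nin E n \ L,
      (maxw ((Nout E i) ∩ (L \ {n})) (fun j => w (i, j))
        - maxw ((Nout E i) ∩ L) (fun j => w (i, j))) := by
    refine (Finset.sum_subset ?_ ?_).symm
    · intro x hx
      simp only [mem_sdiff, Nin, mem_filter, mem_univ, true_and] at hx ⊢
      exact hx.2
    · intro x hx hx2
      simp only [mem_sdiff, mem_univ, true_and] at hx
      simp only [mem_sdiff, Nin, mem_filter, mem_univ, true_and, hx, not_false_iff,
        and_true] at hx2
      have : (Nout E x) ∩ (L \ {n}) = (Nout E x) ∩ L := by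
        ext j
        simp only [mem_inter, mem_sdiff, mem_singleton, Nout, mem_filter, mem_univ, true_and]
        constructor
        · rintro ⟨ha, hb, _⟩; exact ⟨ha, hb⟩
        · rintro ⟨ha, hb⟩
          refine ⟨ha, hb, ?_⟩
          rintro rfl; exact hx2 ha
      rw [this]; ring
  rw [h1, Fobj, ← h2, Finset.sum_sub_distrib]
  ring
end

section
/- In the set-cover reduction graph, removing any element-node from the leader set never decreases the objective: for u ∈ N_B ∩ L, F(L \ {u}) ≥ F(L). Hence there exists an optimal leader set L* with L* ∩ N_B = ∅. -/
open Finset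

/-- Node type of the set-cover reduction graph: element-nodes `N_B`, set-nodes `N_A`,
and one sink node `n₀`. -/
abbrev RNode (U : Type*) := (U ⊕ Finset U) ⊕ Unit

/-- The sink node `n₀`. -/
def sink (U : Type*) : RNode U := Sum.inr ()

/-- The element-node corresponding to `u ∈ U`. -/
def elemNode {U : Type*} (u : U) : RNode U := Sum.inl (Sum.inl u)

/-- The set-node corresponding to `S ∈ 𝔽`. -/
def setNode {U : Type*} (S : Finset U) : RNode U := Sum.inl (Sum.inr S)

/-- Edges of the reduction graph: `(u, S)` whenever `u ∈ S ∈ 𝔽`, and `(S, n₀)` for `S ∈ 𝔽`. -/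
def REdges (U : Type*) [Fintype U] [DecidableEq U] (𝔽 : Finset (Finset U)) :
    Finset (RNode U × RNode U) :=
  univ.filter (fun e =>
    (∃ u : U, ∃ S ∈ 𝔽, u ∈ S ∧ e = (elemNode u, setNode S)) ∨
    (∃ S ∈ 𝔽, e = (setNode S, sink U)))

/-- Weights of the reduction graph: weight `1` on element-to-set edges and `1/2`
on set-to-sink edges. -/
noncomputable def Rw (U : Type*) : RNode U × RNode U → ℝ := fun e =>
  match e with
  | (Sum.inl (Sum.inl _), Sum.inl (Sum.inr _)) => 1
  | (Sum.inl (Sum.inr _), Sum.inr _) => 1 / 2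
  | _ => 0

lemma maxw_nonneg {V : Type*} (s : Finset V) (f : V → ℝ) : 0 ≤ maxw s f := by
  unfold maxw
  induction s using Finset.cons_induction with
  | empty => simp
  | cons a s h ih =>
    rw [Finset.fold_cons]
    exact le_trans ih (le_max_right _ _)

lemma elem_not_in_Nout {U : Type*} [Fintype U] [DecidableEq U] (𝔽 : Finset (Finset U))
    (i : RNode U) (u : U) : elemNode u ∉ Nout (REdges U 𝔽) i := by
  intro h
  simp only [Nout, REdges, Finset.mem_filter, Finset.mem_univ, true_and] at h
  rcases h with ⟨v, S, _, _, h⟩ | ⟨S, _, h⟩ <;>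
    simp [Prod.ext_iff, elemNode, setNode, sink] at h

lemma step {U : Type*} [Fintype U] [DecidableEq U] (𝔽 : Finset (Finset U))
    (L : Finset (RNode U)) (u : U) (hu : elemNode u ∈ L) :
    Fobj (REdges U 𝔽) (Rw U) L ≤ Fobj (REdges U 𝔽) (Rw U) (L.erase (elemNode u)) := by
  unfold Fobj
  have hkey : ∀ i : RNode U,
      Nout (REdges U 𝔽) i ∩ (L.erase (elemNode u)) = Nout (REdges U 𝔽) i ∩ L := by
    intro i
    ext x
    simp only [Finset.mem_inter, Finset.mem_erase]
    constructor
    · rintro ⟨h1, _, h2⟩; exact ⟨h1, h2⟩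
    · rintro ⟨h1, h2⟩
      refine ⟨h1, ?_, h2⟩
      rintro rfl
      exact elem_not_in_Nout 𝔽 i u h1
  have hset : (univ \ L.erase (elemNode u)) = insert (elemNode u) (univ \ L) := by
    ext x
    simp only [Finset.mem_sdiff, Finset.mem_univ, true_and, Finset.mem_erase,
      Finset.mem_insert]
    by_cases hx : x = elemNode u <;> simp [hx, hu]
  rw [hset, Finset.sum_insert (by simp [hu])]
  have := maxw_nonneg (Nout (REdges U 𝔽) (elemNode u) ∩ L.erase (elemNode u))
    (fun j => Rw U (elemNode u, j))
  have heq : ∑ i ∈ univ \ L, maxw (Nout (REdges U 𝔽) i ∩ L) (fun j => Rw U (i, j))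
      = ∑ i ∈ univ \ L, maxw (Nout (REdges U 𝔽) i ∩ L.erase (elemNode u))
        (fun j => Rw U (i, j)) := by
    refine Finset.sum_congr rfl fun i _ => ?_
    rw [hkey]
  linarith

def keep {U : Type*} : RNode U → Bool := fun n =>
  match n with
  | Sum.inl (Sum.inl _) => false
  | _ => true

lemma filter_le {U : Type*} [Fintype U] [DecidableEq U] (𝔽 : Finset (Finset U)) :
    ∀ L : Finset (RNode U),
      Fobj (REdges U 𝔽) (Rw U) L ≤ Fobj (REdges U 𝔽) (Rw U) (L.filter (fun n => keep n)) := by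
  intro L
  induction L using Finset.strongInductionOn with
  | _ L ih =>
    by_cases h : ∃ u : U, elemNode u ∈ L
    · obtain ⟨u, hu⟩ := h
      have h1 := step 𝔽 L u hu
      have h2 := ih (L.erase (elemNode u)) (Finset.erase_ssubset hu)
      have h3 : (L.erase (elemNode u)).filter (fun n => keep n) = L.filter (fun n => keep n) := by
        rw [Finset.filter_erase]
        exact Finset.erase_eq_of_notMem (fun hm => Bool.false_ne_true (Finset.mem_filter.mp hm).2)
      rw [h3] at h2
      linarith
    · push_neg at h
      have : L.filter (fun n => keep n) = L := by
        refine Finset.filter_true_of_mem fun n hn => ?_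
        match n with
        | Sum.inl (Sum.inl u) => exact absurd hn (h u)
        | Sum.inl (Sum.inr _) => rfl
        | Sum.inr _ => rfl
      rw [this]

/-- In the set-cover reduction graph, removing an element-node from the leader set never
decreases the objective; hence there is an optimal leader set containing no element-node. -/
theorem stmt14 (U : Type*) [Fintype U] [DecidableEq U] (𝔽 : Finset (Finset U)) :
    (∀ (L : Finset (RNode U)) (u : U), elemNode u ∈ L →
      Fobj (REdges U 𝔽) (Rw U) L ≤ Fobj (REdges U 𝔽) (Rw U) (L.erase (elemNode u))) ∧
    (∃ Lstar : Finset (RNode U),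
      (∀ L : Finset (RNode U), Fobj (REdges U 𝔽) (Rw U) L ≤ Fobj (REdges U 𝔽) (Rw U) Lstar) ∧
      ∀ u : U, elemNode u ∉ Lstar) := by
  constructor
  · intro L u hu; exact step 𝔽 L u hu
  · obtain ⟨M, -, hM⟩ := Finset.exists_max_image (univ : Finset (Finset (RNode U)))
      (fun L => Fobj (REdges U 𝔽) (Rw U) (L.filter (fun n => keep n))) ⟨∅, mem_univ ∅⟩
    refine ⟨M.filter (fun n => keep n), fun L => ?_, fun u hu => ?_⟩
    · calc Fobj (REdges U 𝔽) (Rw U) L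
          ≤ Fobj (REdges U 𝔽) (Rw U) (L.filter (fun n => keep n)) := filter_le 𝔽 L
        _ ≤ Fobj (REdges U 𝔽) (Rw U) ((M.filter (fun n => keep n)).filter (fun n => keep n)) := by
            have := hM (L.filter (fun n => keep n)) (mem_univ _)
            simpa [Finset.filter_filter] using this
        _ = Fobj (REdges U 𝔽) (Rw U) (M.filter (fun n => keep n)) := by
            rw [Finset.filter_filter]; simp
    · exact Bool.false_ne_true (Finset.mem_filter.mp hu).2
end

section
/- In the set-cover reduction graph, if L ⊆ N_A ∪ {n₀} contains n₀, then F(L) = |{u ∈ N_B : ∃ S ∈ L ∩ N_A, u ∈ S}| + (|N_A| − |L ∩ N_A|)/2; i.e., the objective equals the number of covered elements plus half the number of non-leader set-nodes. -/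
open Finset

lemma maxw_const {V : Type*} {s : Finset V} {f : V → ℝ} {c : ℝ} (hc : 0 ≤ c)
    (h : ∀ x ∈ s, f x = c) : maxw s f = if s.Nonempty then c else 0 := by
  classical
  induction s using Finset.induction with
  | empty => simp [maxw]
  | @insert a s ha ih =>
    have hfa : f a = c := h a (Finset.mem_insert_self a s)
    have hmax : maxw (insert a s) f = max (f a) (maxw s f) := by
      simp [maxw, Finset.fold_insert ha]
    rw [hmax, hfa, ih (fun x hx => h x (Finset.mem_insert_of_mem hx))]
    by_cases hs : s.Nonempty
    · simp [hs, Finset.insert_nonempty]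
    · simp [hs, Finset.insert_nonempty, max_eq_left hc]

/-- In the set-cover reduction graph, if `L ⊆ N_A ∪ {n₀}` contains `n₀`, then the objective
equals the number of covered elements plus half the number of non-leader set-nodes. -/
theorem stmt15 (U : Type*) [Fintype U] [DecidableEq U] (𝔽 : Finset (Finset U))
    (L : Finset (RNode U))
    (hL : ∀ x ∈ L, x = sink U ∨ ∃ S ∈ 𝔽, x = setNode S)
    (hn0 : sink U ∈ L) :
    Fobj (REdges U 𝔽) (Rw U) L =
      ((univ.filter (fun u : U => ∃ S ∈ 𝔽, setNode S ∈ L ∧ u ∈ S)).card : ℝ)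
        + (((𝔽.card : ℝ) - ((𝔽.filter (fun S => setNode S ∈ L)).card : ℝ)) / 2) := by
  classical
  have hUni : (univ : Finset (RNode U)) \ L = univ.filter (fun i => i ∉ L) := by
    ext x; simp
  rw [Fobj, hUni, Finset.sum_filter, Fintype.sum_sum_type, Fintype.sum_sum_type]
  -- element-node part
  have h1 : ∀ u : U,
      (if (Sum.inl (Sum.inl u) : RNode U) ∉ L then
        maxw ((Nout (REdges U 𝔽) (Sum.inl (Sum.inl u))) ∩ L)
          (fun j => Rw U (Sum.inl (Sum.inl u), j)) else 0)
      = if (∃ S ∈ 𝔽, setNode S ∈ L ∧ u ∈ S) then (1:ℝ) else 0 := by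
    intro u
    have hnL : (Sum.inl (Sum.inl u) : RNode U) ∉ L := by
      intro h
      rcases hL _ h with h' | ⟨S, _, h'⟩ <;> simp [sink, setNode] at h'
    rw [if_pos hnL]
    have hmem : ∀ x, x ∈ (Nout (REdges U 𝔽) (Sum.inl (Sum.inl u) : RNode U)) ∩ L ↔
        ∃ S ∈ 𝔽, u ∈ S ∧ x ∈ L ∧ x = setNode S := by
      intro x
      simp only [Finset.mem_inter, Nout, Finset.mem_filter, Finset.mem_univ, true_and,
        REdges]
      simp only [elemNode, setNode, sink, Prod.mk.injEq, Sum.inl.injEq]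
      constructor
      · rintro ⟨h, hxL⟩
        rcases h with ⟨u', S, hS, hu', rfl, rfl⟩ | ⟨S, hS, h', _⟩
        · exact ⟨S, hS, hu', hxL, rfl⟩
        · exact absurd h' (by simp)
      · rintro ⟨S, hS, hu, hxL, rfl⟩
        exact ⟨Or.inl ⟨u, S, hS, hu, rfl, rfl⟩, hxL⟩
    have hconst : maxw ((Nout (REdges U 𝔽) (Sum.inl (Sum.inl u) : RNode U)) ∩ L)
        (fun j => Rw U (Sum.inl (Sum.inl u), j)) =
        if ((Nout (REdges U 𝔽) (Sum.inl (Sum.inl u) : RNode U)) ∩ L).Nonempty then (1:ℝ) else 0 :=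
      maxw_const zero_le_one (by
        intro x hx
        obtain ⟨S, _, _, _, rfl⟩ := (hmem x).1 hx
        rfl)
    rw [hconst]
    congr 1
    simp only [eq_iff_iff, Finset.Nonempty]
    constructor
    · rintro ⟨x, hx⟩
      obtain ⟨S, hS, hu, hxL, rfl⟩ := (hmem x).1 hx
      exact ⟨S, hS, hxL, hu⟩
    · rintro ⟨S, hS, hSL, hu⟩
      exact ⟨setNode S, (hmem _).2 ⟨S, hS, hu, hSL, rfl⟩⟩
  -- set-node part
  have h2 : ∀ S : Finset U,
      (if (Sum.inl (Sum.inr S) : RNode U) ∉ L then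
        maxw ((Nout (REdges U 𝔽) (Sum.inl (Sum.inr S))) ∩ L)
          (fun j => Rw U (Sum.inl (Sum.inr S), j)) else 0)
      = if S ∈ 𝔽 ∧ setNode S ∉ L then (1/2 : ℝ) else 0 := by
    intro S
    have hedge : ∀ x : RNode U, ((Sum.inl (Sum.inr S) : RNode U), x) ∈ REdges U 𝔽 ↔
        S ∈ 𝔽 ∧ x = sink U := by
      intro x
      simp only [REdges, Finset.mem_filter, Finset.mem_univ, true_and]
      simp only [elemNode, setNode,
        sink, Prod.mk.injEq, Sum.inl.injEq]
      constructor
      · rintro (⟨u', S', _, _, h', _⟩ | ⟨S', hS', h', rfl⟩)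
        · exact absurd h' (by simp)
        · simp only [Sum.inr.injEq] at h'
          exact ⟨h' ▸ hS', rfl⟩
      · rintro ⟨hS, rfl⟩
        exact Or.inr ⟨S, hS, rfl, rfl⟩
    by_cases hSL : (Sum.inl (Sum.inr S) : RNode U) ∈ L
    · have hSF : S ∈ 𝔽 := by
        rcases hL _ hSL with h' | ⟨S', hS', h'⟩
        · simp [sink] at h'
        · simp only [setNode, Sum.inl.injEq, Sum.inr.injEq] at h'
          exact h' ▸ hS'
      simp [hSL, hSF, setNode]
    · rw [if_pos hSL]
      by_cases hSF : S ∈ 𝔽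
      · have hset : (Nout (REdges U 𝔽) (Sum.inl (Sum.inr S) : RNode U)) ∩ L = {sink U} := by
          ext x
          simp only [Finset.mem_inter, Nout, Finset.mem_filter, Finset.mem_univ, true_and,
            hedge, Finset.mem_singleton]
          constructor
          · rintro ⟨⟨_, rfl⟩, _⟩; rfl
          · rintro rfl; exact ⟨⟨hSF, rfl⟩, hn0⟩
        rw [hset]
        have : maxw ({sink U} : Finset (RNode U)) (fun j => Rw U (Sum.inl (Sum.inr S), j))
            = max (Rw U (Sum.inl (Sum.inr S), sink U)) 0 := by
          simp [maxw]
        rw [this]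
        have hw : Rw U (Sum.inl (Sum.inr S), sink U) = 1/2 := rfl
        rw [hw]
        simp [hSF, setNode, hSL]
      · have hset : (Nout (REdges U 𝔽) (Sum.inl (Sum.inr S) : RNode U)) ∩ L = ∅ := by
          ext x
          simp only [Finset.mem_inter, Nout, Finset.mem_filter, Finset.mem_univ, true_and,
            hedge, Finset.notMem_empty, iff_false, not_and]
          rintro ⟨hS, _⟩ _
          exact hSF hS
        rw [hset]
        simp [maxw, hSF]
  -- sink part
  have h3 : ∀ x : Unit,
      (if (Sum.inr x : RNode U) ∉ L then
        maxw ((Nout (REdges U 𝔽) (Sum.inr x)) ∩ L)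
          (fun j => Rw U (Sum.inr x, j)) else 0) = 0 := by
    intro x
    cases x
    rw [if_neg]
    simp only [not_not]
    exact hn0
  rw [Finset.sum_congr rfl (fun u _ => h1 u), Finset.sum_congr rfl (fun S _ => h2 S),
    Finset.sum_congr rfl (fun x _ => h3 x)]
  rw [Finset.sum_const_zero, add_zero]
  rw [Finset.sum_boole]
  have hferq : (univ.filter (fun S : Finset U => S ∈ 𝔽 ∧ setNode S ∉ L)) =
      𝔽.filter (fun S => setNode S ∉ L) := by
    ext S; simp [and_comm]
  rw [Finset.sum_ite, Finset.sum_const_zero, add_zero, Finset.sum_const, hferq]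
  have hcards : (𝔽.filter (fun S => setNode S ∈ L)).card
      + (𝔽.filter (fun S => setNode S ∉ L)).card = 𝔽.card :=
    Finset.card_filter_add_card_filter_not (p := fun S => setNode S ∈ L)
  have h4 : ((𝔽.filter (fun S => setNode S ∉ L)).card : ℝ)
      = (𝔽.card : ℝ) - ((𝔽.filter (fun S => setNode S ∈ L)).card : ℝ) := by
    have := congrArg (fun n : ℕ => (n : ℝ)) hcards
    push_cast at this
    linarith
  rw [nsmul_eq_mul, h4]
  ring
end
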